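/- There exist two non-isomorphic finite simple graphs G and H (with no isolated vertices) that are 1-WL-indistinguishable, but such that for each choice of graph matrix M ∈ {adjacency matrix A, Laplacian L, normalized Laplacian L̂}, G and H are NOT EPWL-indistinguishable with respect to M. (EPWL is strictly more expressive than 1-WL.) -/

import Mathlib

open scoped Classical
open Matrix BigOperators

noncomputable section

namespace EPWL

/-! ### Generic node-coloring refinement with pairwise features in a type `α` -/

/-- The common nested type of round-`l` colors: `C 0 = Unit`,
`C (l+1) = C l × Multiset (C l × α)`. -/
def Color (α : Type) : ℕ → Type
  | 0 => Unit
  | l + 1 => Color α l × Multiset (Color α l × α)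

/-- The color refinement: `χ⁰(u) = ()` and
`χ^{l+1}(u) = (χ^l(u), {{(χ^l(v), f u v) : v}})`. -/
def colorFn {V : Type*} [Fintype V] {α : Type} (f : V → V → α) :
    (l : ℕ) → V → Color α l
  | 0 => fun _ => ()
  | l + 1 => fun u =>
      (colorFn f l u, Finset.univ.val.map fun v => (colorFn f l v, f u v))

/-- Two graphs (presented through their pairwise-feature functions) are
indistinguishable by the node-coloring refinement: at every round, the
multisets of node colors agree. -/
def NodeIndist {V W : Type*} [Fintype V] [Fintype W] {α : Type}
    (f : V → V → α) (g : W → W → α) : Prop :=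
  ∀ l : ℕ, Finset.univ.val.map (colorFn f l) = Finset.univ.val.map (colorFn g l)

/-- Atomic type of an ordered vertex pair: `0` if equal, `1` if adjacent,
`2` otherwise. -/
def atp {V : Type*} (G : SimpleGraph V) (u v : V) : ℕ :=
  if u = v then 0 else if G.Adj u v then 1 else 2

/-- 1-WL indistinguishability. -/
def WL1Indist {V W : Type*} [Fintype V] [Fintype W]
    (G : SimpleGraph V) (H : SimpleGraph W) : Prop :=
  NodeIndist (atp G) (atp H)

/-! ### Graph matrices -/

/-- Real adjacency matrix. -/
def adjM {V : Type*} [Fintype V] (G : SimpleGraph V) : Matrix V V ℝ :=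
  G.adjMatrix ℝ

/-- Real (diagonal) degree matrix. -/
def degM {V : Type*} [Fintype V] (G : SimpleGraph V) : Matrix V V ℝ :=
  Matrix.diagonal fun v => (G.degree v : ℝ)

/-- Laplacian matrix `L = D - A`. -/
def lapM {V : Type*} [Fintype V] (G : SimpleGraph V) : Matrix V V ℝ :=
  degM G - adjM G

/-- The diagonal matrix `D^{-1/2}`. -/
def invSqrtDegM {V : Type*} [Fintype V] (G : SimpleGraph V) : Matrix V V ℝ :=
  Matrix.diagonal fun v => (Real.sqrt (G.degree v))⁻¹

/-- Normalized Laplacian `L̂ = D^{-1/2} L D^{-1/2}`. -/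
def normLapM {V : Type*} [Fintype V] (G : SimpleGraph V) : Matrix V V ℝ :=
  invSqrtDegM G * lapM G * invSqrtDegM G

/-- Normalized adjacency matrix `Â = D^{-1/2} A D^{-1/2}`. -/
def normAdjM {V : Type*} [Fintype V] (G : SimpleGraph V) : Matrix V V ℝ :=
  invSqrtDegM G * adjM G * invSqrtDegM G

/-- The diagonal matrix `D⁻¹` of inverse degrees. -/
def invDegM {V : Type*} [Fintype V] (G : SimpleGraph V) : Matrix V V ℝ :=
  Matrix.diagonal fun v => ((G.degree v : ℝ))⁻¹

/-- The random-walk matrix `D⁻¹ A`. -/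
def rwM {V : Type*} [Fintype V] (G : SimpleGraph V) : Matrix V V ℝ :=
  invDegM G * adjM G

/-- The all-ones matrix `J`. -/
def allOnes (V : Type*) : Matrix V V ℝ := Matrix.of fun _ _ => 1

/-- A choice among the three graph matrices `A`, `L`, `L̂`. -/
inductive MatChoice | adj | lap | normLap

/-- The graph matrix associated with a choice. -/
def matOf {V : Type*} [Fintype V] (c : MatChoice) (G : SimpleGraph V) :
    Matrix V V ℝ :=
  match c with
  | .adj => adjM G
  | .lap => lapM G
  | .normLap => normLapM G

/-! ### Spectral decompositions and the eigenspace projection invariant -/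

/-- `IsSpectralDecomp M Λ P` says: `Λ` is the (finite) set of distinct
eigenvalues of the symmetric matrix `M` and, for `lam ∈ Λ`, `P lam` is the
orthogonal projection onto the eigenspace of `lam`. This is characterized
uniquely by: the `P lam` are symmetric idempotent nonzero matrices,
pairwise "orthogonal" (`P lam * P mu = 0` for `lam ≠ mu`), summing to the
identity, with `∑ lam • P lam = M`. -/
structure IsSpectralDecomp {n : Type*} [Fintype n]
    (M : Matrix n n ℝ) (Λ : Finset ℝ) (P : ℝ → Matrix n n ℝ) : Prop where
  symm : ∀ lam ∈ Λ, (P lam)ᵀ = P lam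
  idem : ∀ lam ∈ Λ, P lam * P lam = P lam
  nonzero : ∀ lam ∈ Λ, P lam ≠ 0
  orth : ∀ lam ∈ Λ, ∀ mu ∈ Λ, lam ≠ mu → P lam * P mu = 0
  sum_one : ∑ lam ∈ Λ, P lam = 1
  sum_smul : ∑ lam ∈ Λ, lam • P lam = M

/-- The eigenspace projection invariant
`𝒫^M(u,v) = {{(lam, P_lam(u,v)) : lam eigenvalue of M}}`. -/
def projInv {n : Type*} (Λ : Finset ℝ) (P : ℝ → Matrix n n ℝ) (u v : n) :
    Multiset (ℝ × ℝ) :=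
  Λ.val.map fun lam => (lam, P lam u v)

/-! ### Subgraph Weisfeiler-Lehman variants (SWL, PSWL) and 3-WL -/

/-- Round-`l` color type for SWL. -/
def SColor : ℕ → Type
  | 0 => ℕ
  | l + 1 => SColor l × Multiset (SColor l × ℕ)

/-- Initial pair color: `1` on the diagonal, `0` off it. -/
def initPairColor {V : Type*} (u v : V) : ℕ := if u = v then 1 else 0

/-- The SWL pair-coloring. -/
def swl {V : Type*} [Fintype V] (G : SimpleGraph V) :
    (l : ℕ) → V → V → SColor l
  | 0 => fun u v => initPairColor u v
  | l + 1 => fun u v =>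
      (swl G l u v, Finset.univ.val.map fun w => (swl G l u w, atp G v w))

/-- SWL indistinguishability. -/
def SWLIndist {V W : Type*} [Fintype V] [Fintype W]
    (G : SimpleGraph V) (H : SimpleGraph W) : Prop :=
  ∀ l : ℕ,
    ((Finset.univ : Finset (V × V)).val.map fun p => swl G l p.1 p.2) =
      ((Finset.univ : Finset (W × W)).val.map fun p => swl H l p.1 p.2)

/-- Round-`l` color type for PSWL. -/
def PSColor : ℕ → Type
  | 0 => ℕ
  | l + 1 => PSColor l × PSColor l × Multiset (PSColor l × ℕ)

/-- The PSWL pair-coloring. -/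
def pswl {V : Type*} [Fintype V] (G : SimpleGraph V) :
    (l : ℕ) → V → V → PSColor l
  | 0 => fun u v => initPairColor u v
  | l + 1 => fun u v =>
      (pswl G l u v, pswl G l v v,
        Finset.univ.val.map fun w => (pswl G l u w, atp G v w))

/-- PSWL indistinguishability. -/
def PSWLIndist {V W : Type*} [Fintype V] [Fintype W]
    (G : SimpleGraph V) (H : SimpleGraph W) : Prop :=
  ∀ l : ℕ,
    ((Finset.univ : Finset (V × V)).val.map fun p => pswl G l p.1 p.2) =
      ((Finset.univ : Finset (W × W)).val.map fun p => pswl H l p.1 p.2)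

/-- Round-`l` color type for 3-WL; the initial color records which of
`u, v, w` coincide and which of the pairs are edges. -/
def W3Color : ℕ → Type
  | 0 => Bool × Bool × Bool × Bool × Bool × Bool
  | l + 1 => W3Color l × Multiset (W3Color l × W3Color l × W3Color l)

/-- The 3-WL triple-coloring. -/
def wl3 {V : Type*} [Fintype V] (G : SimpleGraph V) :
    (l : ℕ) → V → V → V → W3Color l
  | 0 => fun u v w =>
      (decide (u = v), decide (u = w), decide (v = w),
        decide (G.Adj u v), decide (G.Adj u w), decide (G.Adj v w))
  | l + 1 => fun u v w =>
      (wl3 G l u v w,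
        Finset.univ.val.map fun z =>
          (wl3 G l z v w, wl3 G l u z w, wl3 G l u v z))

/-- 3-WL indistinguishability. -/
def WL3Indist {V W : Type*} [Fintype V] [Fintype W]
    (G : SimpleGraph V) (H : SimpleGraph W) : Prop :=
  ∀ l : ℕ,
    ((Finset.univ : Finset (V × V × V)).val.map fun p => wl3 G l p.1 p.2.1 p.2.2) =
      ((Finset.univ : Finset (W × W × W)).val.map fun p => wl3 H l p.1 p.2.1 p.2.2)

/-! ### Distances -/

/-- The shortest-path distance, valued in `ℕ∞`. -/
def spd {V : Type*} (G : SimpleGraph V) (u v : V) : ℕ∞ := G.edist u v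

/-- The four Penrose conditions characterizing the Moore–Penrose
pseudoinverse `X` of `B`. -/
def IsMoorePenrose {n : Type*} [Fintype n] (B X : Matrix n n ℝ) : Prop :=
  B * X * B = B ∧ X * B * X = X ∧ (B * X)ᵀ = B * X ∧ (X * B)ᵀ = X * B

/-- Resistance distance computed from (a Moore–Penrose pseudoinverse of)
the Laplacian: `X(u,u) + X(v,v) - 2X(u,v)` for vertices in the same
connected component, and `∞` otherwise. -/
def rdOf {V : Type*} (G : SimpleGraph V) (X : Matrix V V ℝ) (u v : V) :
    WithTop ℝ :=
  if G.Reachable u v then ((X u u + X v v - 2 * X u v : ℝ) : WithTop ℝ) else ⊤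

/-- Matrix exponential, as the everywhere-convergent power series
`exp B = ∑ Bⁿ/n!`. -/
def matExp {V : Type*} [Fintype V] (B : Matrix V V ℝ) : Matrix V V ℝ :=
  ∑' n : ℕ, ((n.factorial : ℝ))⁻¹ • B ^ n

/-! ### Connectivity notions -/

/-- Number of connected components. -/
def numComponents {V : Type*} (G : SimpleGraph V) : ℕ :=
  Nat.card G.ConnectedComponent

/-- A cut vertex: deleting it (and all incident edges) strictly increases
the number of connected components. -/
def IsCutVertex {V : Type*} (G : SimpleGraph V) (v : V) : Prop :=
  numComponents G < numComponents (G.induce {w : V | w ≠ v})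

/-- A cut edge: it is an edge whose deletion strictly increases the number
of connected components. -/
def IsCutEdge {V : Type*} (G : SimpleGraph V) (e : Sym2 V) : Prop :=
  e ∈ G.edgeSet ∧ numComponents G < numComponents (G.deleteEdges {e})


/-! ### Auxiliary material for the proof -/

section Aux

/-- The 6-cycle. -/
def G6 : SimpleGraph (Fin 6) where
  Adj i j := j = i + 1 ∨ i = j + 1
  symm := ⟨fun _ _ h => Or.symm h⟩
  loopless := ⟨by intro a h; revert a; decide⟩

/-- Two disjoint triangles. -/
def H6 : SimpleGraph (Fin 6) where
  Adj i j := i ≠ j ∧ (i : ℕ) / 3 = (j : ℕ) / 3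
  symm := ⟨fun _ _ h => ⟨Ne.symm h.1, h.2.symm⟩⟩
  loopless := ⟨fun _ h => h.1 rfl⟩

instance : DecidableRel G6.Adj := fun _ _ => inferInstanceAs (Decidable (_ ∨ _))
instance : DecidableRel H6.Adj := fun _ _ => inferInstanceAs (Decidable (_ ∧ _))

lemma degG6 : ∀ v, G6.degree v = 2 := by decide
lemma degH6 : ∀ v, H6.degree v = 2 := by decide

lemma degG6' (v : Fin 6) {i : Fintype (G6.neighborSet v)} :
    @SimpleGraph.degree _ G6 v i = 2 := by
  rw [congrArg (fun j => @SimpleGraph.degree _ G6 v j) (Subsingleton.elim i _)]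
  exact degG6 v

lemma degH6' (v : Fin 6) {i : Fintype (H6.neighborSet v)} :
    @SimpleGraph.degree _ H6 v i = 2 := by
  rw [congrArg (fun j => @SimpleGraph.degree _ H6 v j) (Subsingleton.elim i _)]
  exact degH6 v

lemma G6_no_triangle :
    ∀ a b c : Fin 6, G6.Adj a b → G6.Adj a c → G6.Adj b c → False := by decide

lemma atp_eval {V : Type*} [DecidableEq V] (G : SimpleGraph V) [DecidableRel G.Adj]
    (u v : V) : atp G u v = if u = v then 0 else if G.Adj u v then 1 else 2 := by
  unfold atp
  by_cases h : u = v
  · simp [h]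
  · by_cases h2 : G.Adj u v <;> simp [h, h2]

lemma atp_key : ∀ u x : Fin 6,
    Multiset.map (fun v => atp G6 u v) Finset.univ.val =
      Multiset.map (fun v => atp H6 x v) Finset.univ.val := by
  intro u x
  rw [Multiset.map_congr rfl fun v _ => atp_eval G6 u v,
      Multiset.map_congr rfl fun v _ => atp_eval H6 x v]
  revert u x; decide

lemma wl1_const : ∀ l : ℕ, ∃ c : Color ℕ l,
    (∀ u, colorFn (atp G6) l u = c) ∧ (∀ x, colorFn (atp H6) l x = c) := by
  intro l
  induction l with
  | zero => exact ⟨(), fun _ => rfl, fun _ => rfl⟩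
  | succ l ih =>
    obtain ⟨c, hG, hH⟩ := ih
    refine ⟨(c, Multiset.map (fun a => (c, a))
      (Multiset.map (fun v => atp G6 0 v) Finset.univ.val)), ?_, ?_⟩
    · intro u
      show (colorFn (atp G6) l u, _) = _
      rw [hG u]
      refine Prod.ext rfl ?_
      show Multiset.map (fun v => (colorFn (atp G6) l v, atp G6 u v)) Finset.univ.val = _
      rw [Multiset.map_congr rfl fun v _ => by rw [hG v]]
      rw [show (Multiset.map (fun v => (c, atp G6 u v)) Finset.univ.val) =
        Multiset.map ((fun a => (c, a)) ∘ (fun v => atp G6 u v)) Finset.univ.val from rfl]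
      rw [← Multiset.map_map, (atp_key u 0).trans (atp_key 0 0).symm]
    · intro x
      show (colorFn (atp H6) l x, _) = _
      rw [hH x]
      refine Prod.ext rfl ?_
      show Multiset.map (fun v => (colorFn (atp H6) l v, atp H6 x v)) Finset.univ.val = _
      rw [Multiset.map_congr rfl fun v _ => by rw [hH v]]
      rw [show (Multiset.map (fun v => (c, atp H6 x v)) Finset.univ.val) =
        Multiset.map ((fun a => (c, a)) ∘ (fun v => atp H6 x v)) Finset.univ.val from rfl]
      rw [← Multiset.map_map, (atp_key 0 x).symm]

lemma wl1_G6_H6 : WL1Indist G6 H6 := by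
  intro l
  obtain ⟨c, hG, hH⟩ := wl1_const l
  rw [Multiset.map_congr rfl fun v _ => hG v, Multiset.map_congr rfl fun v _ => hH v]

/-! Spectral decomposition facts -/

variable {n : Type*} [Fintype n] {M : Matrix n n ℝ} {Λ : Finset ℝ}
  {P : ℝ → Matrix n n ℝ}

lemma IsSpectralDecomp.mul_proj (h : IsSpectralDecomp M Λ P) {lam : ℝ} (hl : lam ∈ Λ) :
    M * P lam = lam • P lam := by
  rw [← h.sum_smul, Finset.sum_mul, Finset.sum_eq_single lam]
  · rw [smul_mul_assoc, h.idem lam hl]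
  · intro mu hmu hne
    rw [smul_mul_assoc, h.orth mu hmu lam hl hne, smul_zero]
  · intro hx; exact absurd hl hx

lemma IsSpectralDecomp.proj_mul (h : IsSpectralDecomp M Λ P) {lam : ℝ} (hl : lam ∈ Λ) :
    P lam * M = lam • P lam := by
  rw [← h.sum_smul, Finset.mul_sum, Finset.sum_eq_single lam]
  · rw [mul_smul_comm, h.idem lam hl]
  · intro mu hmu hne
    rw [mul_smul_comm, h.orth lam hl mu hmu (Ne.symm hne), smul_zero]
  · intro hx; exact absurd hl hx

lemma IsSpectralDecomp.eig_of_mem (h : IsSpectralDecomp M Λ P) {lam : ℝ} (hl : lam ∈ Λ) :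
    ∃ x : n → ℝ, x ≠ 0 ∧ M.mulVec x = lam • x := by
  have hne : ∃ i j, P lam i j ≠ 0 := by
    by_contra hc
    push_neg at hc
    exact h.nonzero lam hl (by ext i j; exact hc i j)
  obtain ⟨i0, j0, hij⟩ := hne
  refine ⟨fun i => P lam i j0, fun hz => hij (congrFun hz i0), ?_⟩
  funext i
  have := congrFun (congrFun (h.mul_proj hl) i) j0
  simpa [Matrix.mul_apply, Matrix.mulVec, dotProduct] using this

lemma IsSpectralDecomp.mem_of_eig (h : IsSpectralDecomp M Λ P) {lam : ℝ} {x : n → ℝ}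
    (hx : x ≠ 0) (he : M.mulVec x = lam • x) : lam ∈ Λ := by
  by_contra hmem
  have key : ∀ mu ∈ Λ, (P mu).mulVec x = 0 := by
    intro mu hmu
    have h1 : (P mu * M).mulVec x = mu • (P mu).mulVec x := by
      rw [h.proj_mul hmu, Matrix.smul_mulVec]
    have h2 : (P mu * M).mulVec x = lam • (P mu).mulVec x := by
      rw [← Matrix.mulVec_mulVec, he, Matrix.mulVec_smul]
    have h3 : (mu - lam) • (P mu).mulVec x = 0 := by
      rw [sub_smul, h1.symm.trans h2]; abel
    have hne : mu - lam ≠ 0 := sub_ne_zero.mpr fun hc => hmem (hc ▸ hmu)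
    exact (smul_eq_zero.mp h3).resolve_left hne
  apply hx
  have h1 : (1 : Matrix n n ℝ).mulVec x = 0 := by
    rw [← h.sum_one]
    have hsum : ∀ s : Finset ℝ, (∑ l ∈ s, P l) *ᵥ x = ∑ l ∈ s, P l *ᵥ x := by
      intro s
      induction s using Finset.induction with
      | empty => simp
      | insert _ _ hn ih => rw [Finset.sum_insert hn, Finset.sum_insert hn, Matrix.add_mulVec, ih]
    rw [hsum]
    exact Finset.sum_eq_zero key
  simpa using h1

/-- If the projection-invariant colorings are node-indistinguishable, the
eigenvalue sets agree. -/
lemma eigSet_eq_of_nodeIndist {V W : Type*} [Fintype V] [Fintype W] [Nonempty V]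
    {ΛG : Finset ℝ} {PG : ℝ → Matrix V V ℝ} {ΛH : Finset ℝ} {PH : ℝ → Matrix W W ℝ}
    (h : NodeIndist (projInv ΛG PG) (projInv ΛH PH)) : ΛG = ΛH := by
  obtain ⟨u0⟩ := ‹Nonempty V›
  have h1 := h 1
  have hmem : colorFn (projInv ΛG PG) 1 u0 ∈
      Multiset.map (colorFn (projInv ΛH PH) 1) Finset.univ.val := by
    rw [← h1]
    exact Multiset.mem_map_of_mem _ (by simp)
  obtain ⟨x0, -, hx0⟩ := Multiset.mem_map.mp hmem
  have hsnd : Multiset.map (fun y => (colorFn (projInv ΛH PH) 0 y, projInv ΛH PH x0 y))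
      Finset.univ.val =
      Multiset.map (fun v => (colorFn (projInv ΛG PG) 0 v, projInv ΛG PG u0 v))
      Finset.univ.val := congrArg Prod.snd hx0
  have hmem2 : (colorFn (projInv ΛG PG) 0 u0, projInv ΛG PG u0 u0) ∈
      Multiset.map (fun y => (colorFn (projInv ΛH PH) 0 y, projInv ΛH PH x0 y))
      Finset.univ.val := by
    rw [hsnd]
    exact Multiset.mem_map_of_mem _ (by simp)
  obtain ⟨y0, -, hy0⟩ := Multiset.mem_map.mp hmem2
  have hpq : projInv ΛH PH x0 y0 = projInv ΛG PG u0 u0 := congrArg Prod.snd hy0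
  have hfst := congrArg (Multiset.map Prod.fst) hpq
  simp only [projInv, Multiset.map_map, Function.comp] at hfst
  simp only [Multiset.map_id'] at hfst
  exact (Finset.val_inj.mp hfst).symm

/-! Concrete eigenvector computations -/

/-- The eigenvector `(1,1,0,-1,-1,0)` of the 6-cycle. -/
def xv : Fin 6 → ℝ := ![1, 1, 0, -1, -1, 0]

lemma xv_ne : xv ≠ 0 := fun hz => by
  have := congrFun hz 0
  norm_num [xv] at this

lemma adjG6_mulVec : (adjM G6).mulVec xv = xv := by
  funext i
  fin_cases i <;>
    simp [adjM, Matrix.mulVec, dotProduct, Fin.sum_univ_six, xv, SimpleGraph.adjMatrix_apply] <;>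
    simp [G6] <;>
    first
      | rfl
      | norm_num [show ((2 : Fin 6)) ≠ 0 + 1 by decide]

lemma adjH6_eig (x : Fin 6 → ℝ) (h : (adjM H6).mulVec x = x) : x = 0 := by
  have h0 := congrFun h 0
  have h1 := congrFun h 1
  have h2 := congrFun h 2
  have h3 := congrFun h 3
  have h4 := congrFun h 4
  have h5 := congrFun h 5
  simp [adjM, Matrix.mulVec, dotProduct, Fin.sum_univ_six, SimpleGraph.adjMatrix_apply] at h0 h1 h2 h3 h4 h5
  simp [H6,
    show ((3 : Fin 6) : ℕ) = 3 from rfl, show ((4 : Fin 6) : ℕ) = 4 from rfl,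
    show ((5 : Fin 6) : ℕ) = 5 from rfl] at h0 h1 h2 h3 h4 h5
  funext i
  fin_cases i <;> simp <;> linarith

/-! Degree-matrix computations -/

lemma diag_const_smul {m : Type*} [Fintype m] [DecidableEq m] (c : ℝ) :
    Matrix.diagonal (fun _ : m => c) = c • (1 : Matrix m m ℝ) := by
  ext i j
  by_cases h : i = j <;> simp [Matrix.diagonal, Matrix.one_apply, h]

lemma degM_G6 : degM G6 = (2 : ℝ) • (1 : Matrix (Fin 6) (Fin 6) ℝ) := by
  rw [← diag_const_smul, degM]
  ext i j
  by_cases h : i = j <;> simp [Matrix.diagonal_apply, h, degG6']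

lemma degM_H6 : degM H6 = (2 : ℝ) • (1 : Matrix (Fin 6) (Fin 6) ℝ) := by
  rw [← diag_const_smul, degM]
  ext i j
  by_cases h : i = j <;> simp [Matrix.diagonal_apply, h, degH6']

lemma invSqrtDegM_G6 :
    invSqrtDegM G6 = (Real.sqrt 2)⁻¹ • (1 : Matrix (Fin 6) (Fin 6) ℝ) := by
  rw [← diag_const_smul, invSqrtDegM]
  ext i j
  by_cases h : i = j <;> simp [Matrix.diagonal_apply, h, degG6']

lemma invSqrtDegM_H6 :
    invSqrtDegM H6 = (Real.sqrt 2)⁻¹ • (1 : Matrix (Fin 6) (Fin 6) ℝ) := by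
  rw [← diag_const_smul, invSqrtDegM]
  ext i j
  by_cases h : i = j <;> simp [Matrix.diagonal_apply, h, degH6']

lemma normLap_eq {G : SimpleGraph (Fin 6)}
    (hd : invSqrtDegM G = (Real.sqrt 2)⁻¹ • (1 : Matrix (Fin 6) (Fin 6) ℝ)) :
    normLapM G = (2 : ℝ)⁻¹ • lapM G := by
  rw [normLapM, hd, Matrix.smul_mul, Matrix.mul_smul, Matrix.one_mul, Matrix.mul_one,
    smul_smul]
  congr 1
  rw [← mul_inv, Real.mul_self_sqrt (by norm_num : (0:ℝ) ≤ 2)]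

lemma lapG6_mulVec : (lapM G6).mulVec xv = xv := by
  rw [lapM, Matrix.sub_mulVec, degM_G6, adjG6_mulVec, Matrix.smul_mulVec,
    Matrix.one_mulVec]
  funext i
  simp [Pi.sub_apply]
  ring

lemma lapH6_eig (x : Fin 6 → ℝ) (h : (lapM H6).mulVec x = x) : x = 0 := by
  apply adjH6_eig
  rw [lapM, Matrix.sub_mulVec, degM_H6, Matrix.smul_mulVec, Matrix.one_mulVec] at h
  funext i
  have := congrFun h i
  simp [Pi.sub_apply, Pi.smul_apply] at this
  linarith

end Aux


/-- There exist non-isomorphic graphs that are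
1-WL-indistinguishable but, for each `M ∈ {A, L, L̂}`, not
EPWL-indistinguishable with respect to `M`. -/
theorem epwl_strictly_finer_than_wl1 :
    ∃ (n : ℕ) (G H : SimpleGraph (Fin n)),
      (∀ v, 0 < G.degree v) ∧ (∀ v, 0 < H.degree v) ∧
      IsEmpty (G ≃g H) ∧
      WL1Indist G H ∧
      ∀ (c : MatChoice) (ΛG : Finset ℝ) (PG : ℝ → Matrix (Fin n) (Fin n) ℝ),
        IsSpectralDecomp (matOf c G) ΛG PG →
        ∀ (ΛH : Finset ℝ) (PH : ℝ → Matrix (Fin n) (Fin n) ℝ),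
          IsSpectralDecomp (matOf c H) ΛH PH →
          ¬ NodeIndist (projInv ΛG PG) (projInv ΛH PH) := by
  refine ⟨6, G6, H6, fun v => by rw [degG6' v]; omega,
    fun v => by rw [degH6' v]; omega, ?_, wl1_G6_H6, ?_⟩
  · refine ⟨fun φ => ?_⟩
    let ψ : H6 ≃g G6 := φ.symm
    exact G6_no_triangle (ψ 0) (ψ 1) (ψ 2)
      (ψ.map_adj_iff.mpr (by decide)) (ψ.map_adj_iff.mpr (by decide))
      (ψ.map_adj_iff.mpr (by decide))
  · intro c ΛG PG hG ΛH PH hH hind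
    have hΛ : ΛG = ΛH := eigSet_eq_of_nodeIndist hind
    cases c with
    | adj =>
      have h1 : (1 : ℝ) ∈ ΛG := hG.mem_of_eig xv_ne (by
        show (adjM G6).mulVec xv = _
        rw [one_smul]; exact adjG6_mulVec)
      obtain ⟨x, hx, he⟩ := hH.eig_of_mem (hΛ ▸ h1)
      rw [one_smul] at he
      exact hx (adjH6_eig x he)
    | lap =>
      have h1 : (1 : ℝ) ∈ ΛG := hG.mem_of_eig xv_ne (by
        show (lapM G6).mulVec xv = _
        rw [one_smul]; exact lapG6_mulVec)
      obtain ⟨x, hx, he⟩ := hH.eig_of_mem (hΛ ▸ h1)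
      rw [one_smul] at he
      exact hx (lapH6_eig x he)
    | normLap =>
      have h1 : ((2:ℝ)⁻¹) ∈ ΛG := hG.mem_of_eig xv_ne (by
        show (normLapM G6).mulVec xv = _
        rw [normLap_eq invSqrtDegM_G6, Matrix.smul_mulVec, lapG6_mulVec])
      obtain ⟨x, hx, he⟩ := hH.eig_of_mem (hΛ ▸ h1)
      have he2 : (lapM H6).mulVec x = x := by
        have := he
        rw [show matOf MatChoice.normLap H6 = normLapM H6 from rfl,
          normLap_eq invSqrtDegM_H6, Matrix.smul_mulVec] at this
        exact smul_right_injective (Fin 6 → ℝ) (inv_ne_zero two_ne_zero) this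
      exact hx (lapH6_eig x he2)


end EPWL
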